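/- Let Ω be a bounded domain, u : [0,ε₀) × closure(Ω) → R bounded continuous with M = sup u, m ≤ inf u, and ρ : closure(Ω) → R continuous with ρ ≤ 0. For 0 < ε < ε₀ define h(t) = 0 for t < ε and h(t) = C(t−ε) for t ≥ ε, with C = 1 + (M − m + max(−ρ))/(ε₀ − ε). Then the function ũ defined as max{u(t,z) − h(t), m + ρ(z)} on [0,ε₀) × closure(Ω) and as m + ρ(z) on [ε₀,T) × closure(Ω) is continuous on [0,T) × closure(Ω), satisfies ũ ≤ u on [0,ε₀) × closure(Ω), and ũ = u on [0,ε) × closure(Ω). -/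
import Mathlib


/-- Extension of a subsolution-type function from a short time interval: with
`C = 1 + (M - m + max (-ρ)) / (ε₀ - ε)` and `h t = 0` for `t < ε`, `h t = C (t - ε)`
for `t ≥ ε`, the function `ũ` equal to `max (u (t,z) - h t) (m + ρ z)` for `t < ε₀`
and to `m + ρ z` for `t ≥ ε₀` is continuous on `[0,T) × closure Ω`, satisfies `ũ ≤ u`
on `[0,ε₀) × closure Ω` and `ũ = u` on `[0,ε) × closure Ω`. -/
theorem glue_subsolution_extension
    {n : ℕ} (T ε ε₀ : ℝ) (hε : 0 < ε) (hεε₀ : ε < ε₀) (hε₀T : ε₀ < T)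
    (Ω : Set (EuclideanSpace ℂ (Fin n)))
    (hΩopen : IsOpen Ω) (hΩbdd : Bornology.IsBounded Ω) (hΩne : Ω.Nonempty)
    (u : ℝ × EuclideanSpace ℂ (Fin n) → ℝ)
    (hu : ContinuousOn u (Set.Ico 0 ε₀ ×ˢ closure Ω))
    (M m : ℝ)
    (hM : ∀ q ∈ Set.Ico 0 ε₀ ×ˢ closure Ω, u q ≤ M)
    (hm : ∀ q ∈ Set.Ico 0 ε₀ ×ˢ closure Ω, m ≤ u q)
    (ρ : EuclideanSpace ℂ (Fin n) → ℝ)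
    (hρ : ContinuousOn ρ (closure Ω)) (hρneg : ∀ z ∈ closure Ω, ρ z ≤ 0) :
    (ContinuousOn
        (fun q : ℝ × EuclideanSpace ℂ (Fin n) =>
          if q.1 < ε₀ then
            max (u q - (if q.1 < ε then 0 else
              (1 + (M - m + sSup ((fun z => -ρ z) '' closure Ω)) / (ε₀ - ε)) * (q.1 - ε)))
              (m + ρ q.2)
          else m + ρ q.2)
        (Set.Ico 0 T ×ˢ closure Ω)) ∧
    (∀ q ∈ Set.Ico 0 ε₀ ×ˢ closure Ω,
        (if q.1 < ε₀ then
            max (u q - (if q.1 < ε then 0 else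
              (1 + (M - m + sSup ((fun z => -ρ z) '' closure Ω)) / (ε₀ - ε)) * (q.1 - ε)))
              (m + ρ q.2)
          else m + ρ q.2) ≤ u q) ∧
    (∀ q ∈ Set.Ico 0 ε ×ˢ closure Ω,
        (if q.1 < ε₀ then
            max (u q - (if q.1 < ε then 0 else
              (1 + (M - m + sSup ((fun z => -ρ z) '' closure Ω)) / (ε₀ - ε)) * (q.1 - ε)))
              (m + ρ q.2)
          else m + ρ q.2) = u q) := by

  have hεε₀' : (0:ℝ) < ε₀ - ε := by linarith
  set S := sSup ((fun z => -ρ z) '' closure Ω) with hSdef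
  set C := 1 + (M - m + S) / (ε₀ - ε) with hCdef
  have hK : IsCompact (closure Ω) := hΩbdd.isCompact_closure
  obtain ⟨z₀, hz₀⟩ := hΩne
  have hz₀' : z₀ ∈ closure Ω := subset_closure hz₀
  have hbdd : BddAbove ((fun z => -ρ z) '' closure Ω) :=
    (hK.image_of_continuousOn hρ.neg).bddAbove
  have hSle : ∀ z ∈ closure Ω, -ρ z ≤ S := fun z hz => le_csSup hbdd ⟨z, hz, rfl⟩
  have hS0 : 0 ≤ S := le_trans (by linarith [hρneg z₀ hz₀']) (hSle z₀ hz₀')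
  have hq₀ : ((0:ℝ), z₀) ∈ Set.Ico 0 ε₀ ×ˢ closure Ω := ⟨⟨le_refl _, hε.trans hεε₀⟩, hz₀'⟩
  have hMm : m ≤ M := le_trans (hm _ hq₀) (hM _ hq₀)
  have hC0 : 0 < C := by
    have : 0 ≤ (M - m + S) / (ε₀ - ε) := div_nonneg (by linarith) hεε₀'.le
    rw [hCdef]; linarith
  set t₁ := ε + (M - m + S) / C with ht₁def
  have ht₁ε : ε ≤ t₁ := by
    have := div_nonneg (show (0:ℝ) ≤ M - m + S by linarith) hC0.le
    rw [ht₁def]; linarith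
  have hCt₁ : C * (t₁ - ε) = M - m + S := by
    rw [ht₁def]; field_simp; ring
  have ht₁ε₀ : t₁ < ε₀ := by
    have h1 : C * (ε₀ - ε) = (ε₀ - ε) + (M - m + S) := by
      rw [hCdef]; field_simp
    have h2 : (M - m + S) / C < ε₀ - ε := by
      rw [div_lt_iff₀ hC0]; nlinarith
    rw [ht₁def]; linarith
  have hmρ : ∀ q ∈ Set.Ico 0 ε₀ ×ˢ closure Ω, m + ρ q.2 ≤ u q := fun q hq => by
    have h1 := hρneg q.2 hq.2
    have h2 := hm q hq
    linarith
  have hh0 : ∀ t : ℝ, (0:ℝ) ≤ (if t < ε then 0 else C * (t - ε)) := fun t => by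
    split_ifs with h
    · exact le_refl _
    · exact mul_nonneg hC0.le (by linarith [not_lt.mp h])
  have hheq : ∀ t : ℝ, (if t < ε then (0:ℝ) else C * (t - ε)) = max 0 (C * (t - ε)) := by
    intro t
    split_ifs with h
    · exact (max_eq_left (mul_nonpos_of_nonneg_of_nonpos hC0.le (by linarith))).symm
    · exact (max_eq_right (mul_nonneg hC0.le (by linarith [not_lt.mp h]))).symm
  have hkey : ∀ t z, t₁ ≤ t → z ∈ closure Ω → t < ε₀ → 0 ≤ t →
      u (t, z) - (if t < ε then 0 else C * (t - ε)) ≤ m + ρ z := by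
    intro t z htt hz htε₀ ht0
    rw [if_neg (not_lt.mpr (le_trans ht₁ε htt))]
    have h1 : u (t, z) ≤ M := hM (t, z) ⟨⟨ht0, htε₀⟩, hz⟩
    have h2 : C * (t₁ - ε) ≤ C * (t - ε) := by
      apply mul_le_mul_of_nonneg_left (by linarith) hC0.le
    have h3 := hSle z hz
    rw [hCt₁] at h2
    linarith
  have hρ2 : ContinuousOn (fun p : ℝ × EuclideanSpace ℂ (Fin n) => m + ρ p.2)
      (Set.Ico 0 T ×ˢ closure Ω) :=
    continuousOn_const.add (hρ.comp continuous_snd.continuousOn fun p hp => hp.2)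
  have hglue : ∀ q ∈ Set.Ico 0 T ×ˢ closure Ω, t₁ ≤ q.1 →
      (if q.1 < ε₀ then
          max (u q - (if q.1 < ε then 0 else C * (q.1 - ε))) (m + ρ q.2)
        else m + ρ q.2) = m + ρ q.2 := by
    rintro ⟨t, z⟩ ⟨⟨ht0, htT⟩, hz⟩ ht₁t
    dsimp only
    by_cases h : t < ε₀
    · rw [if_pos h]
      exact max_eq_right (hkey t z ht₁t hz h ht0)
    · rw [if_neg h]
  refine ⟨?_, ?_, ?_⟩
  · intro q hq
    by_cases hqε₀ : q.1 < ε₀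
    · have hs : (Set.Ico 0 ε₀ ×ˢ closure Ω) ∈ nhdsWithin q (Set.Ico 0 T ×ˢ closure Ω) := by
        apply mem_nhdsWithin.mpr
        refine ⟨Set.Iio ε₀ ×ˢ Set.univ, isOpen_Iio.prod isOpen_univ, ⟨hqε₀, trivial⟩, ?_⟩
        rintro ⟨t, z⟩ ⟨⟨ht1, -⟩, ⟨ht0, -⟩, hz⟩
        exact ⟨⟨ht0, ht1⟩, hz⟩
      have hq' : q ∈ Set.Ico 0 ε₀ ×ˢ closure Ω := ⟨⟨hq.1.1, hqε₀⟩, hq.2⟩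
      have hcont : Continuous (fun p : ℝ × EuclideanSpace ℂ (Fin n) =>
          (if p.1 < ε then (0:ℝ) else C * (p.1 - ε))) := by
        have heq : (fun p : ℝ × EuclideanSpace ℂ (Fin n) =>
            (if p.1 < ε then (0:ℝ) else C * (p.1 - ε))) =
            fun p => max 0 (C * (p.1 - ε)) := funext fun p => hheq p.1
        rw [heq]
        exact continuous_const.max (continuous_const.mul
          (continuous_fst.sub continuous_const))
      have hsub : (Set.Ico 0 ε₀ ×ˢ closure Ω) ⊆ (Set.Ico 0 T ×ˢ closure Ω) := by
        rintro ⟨t, z⟩ ⟨⟨ht0, ht1⟩, hz⟩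
        exact ⟨⟨ht0, by linarith⟩, hz⟩
      have hρ3 : ContinuousWithinAt (fun p : ℝ × EuclideanSpace ℂ (Fin n) => m + ρ p.2)
          (Set.Ico 0 ε₀ ×ˢ closure Ω) q := (hρ2.mono hsub) q hq'
      have hF : ContinuousWithinAt
          (fun p : ℝ × EuclideanSpace ℂ (Fin n) =>
            max (u p - (if p.1 < ε then 0 else C * (p.1 - ε))) (m + ρ p.2))
          (Set.Ico 0 ε₀ ×ˢ closure Ω) q :=
        ((hu q hq').sub hcont.continuousWithinAt).max hρ3
      have hcw : ContinuousWithinAt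
          (fun q : ℝ × EuclideanSpace ℂ (Fin n) =>
            if q.1 < ε₀ then
              max (u q - (if q.1 < ε then 0 else C * (q.1 - ε))) (m + ρ q.2)
            else m + ρ q.2)
          (Set.Ico 0 ε₀ ×ˢ closure Ω) q := by
        apply hF.congr
        · intro p hp
          exact if_pos hp.1.2
        · exact if_pos hqε₀
      exact hcw.mono_of_mem_nhdsWithin hs
    · have hG : ContinuousWithinAt (fun p : ℝ × EuclideanSpace ℂ (Fin n) => m + ρ p.2)
          (Set.Ico 0 T ×ˢ closure Ω) q := hρ2 q hq
      apply hG.congr_of_eventuallyEq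
      · have hmem : {p : ℝ × EuclideanSpace ℂ (Fin n) | t₁ < p.1} ∈
            nhdsWithin q (Set.Ico 0 T ×ˢ closure Ω) :=
          nhdsWithin_le_nhds ((isOpen_Ioi.preimage continuous_fst).mem_nhds
            (show t₁ < q.1 by linarith [not_lt.mp hqε₀]))
        filter_upwards [hmem, self_mem_nhdsWithin] with p hp1 hp2
        exact hglue p hp2 hp1.le
      · exact if_neg hqε₀
  · intro q hq
    rw [if_pos hq.1.2]
    exact max_le (by linarith [hh0 q.1]) (hmρ q hq)
  · intro q hq
    have hq' : q ∈ Set.Ico 0 ε₀ ×ˢ closure Ω := ⟨⟨hq.1.1, by linarith [hq.1.2]⟩, hq.2⟩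
    rw [if_pos hq'.1.2, if_pos hq.1.2]
    rw [sub_zero]
    exact max_eq_left (hmρ q hq')
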